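/- With Ω the Cayley form on ℝ⁸ = ℝ⁴ × ℝ⁴, the matrix A = ((0,0,1),(0,1,0),(−1,0,0)), and Iᵅ, Îᵅ the standard anti-self-dual triples on the two ℝ⁴ factors, a skew-symmetric F satisfying the octonionic instanton equation F_{ab} = ½ Ω_{abcd} F_{cd} satisfies, for its components F_{ij} with both indices in the first factor: Iᵅ · F = ∑_β A_{αβ} (Îᵝ · F) for α = 1, 2, 3, where Iᵅ · F = ∑_{i,j∈{1,…,4}} Iᵅ_{ij} F_{ij} and Îᵝ · F = ∑_{m,n∈{5,…,8}} Îᵝ_{mn} F_{mn}. -/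

import Mathlib

open Matrix

/-- Kronecker delta on `Fin 8`. -/
noncomputable def kdelta (a b : Fin 8) : ℝ := if a = b then 1 else 0

/-- The generalised Kronecker delta `δ^{p₁…p₄}_{q₁…q₄}`. -/
noncomputable def gdelta (p q : Fin 4 → Fin 8) : ℝ :=
  Matrix.det (fun i j => kdelta (p i) (q j))

/-- The fully antisymmetric components `Ω_{abcd}` of the Cayley 4-form. -/
noncomputable def Omega4 (a b c d : Fin 8) : ℝ :=
  gdelta ![0, 1, 2, 3] ![a, b, c, d] + gdelta ![0, 1, 4, 7] ![a, b, c, d] -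
    gdelta ![0, 1, 5, 6] ![a, b, c, d] + gdelta ![0, 2, 4, 6] ![a, b, c, d] +
    gdelta ![0, 2, 5, 7] ![a, b, c, d] - gdelta ![0, 3, 4, 5] ![a, b, c, d] +
    gdelta ![0, 3, 6, 7] ![a, b, c, d] + gdelta ![1, 2, 4, 5] ![a, b, c, d] -
    gdelta ![1, 2, 6, 7] ![a, b, c, d] + gdelta ![1, 3, 4, 6] ![a, b, c, d] +
    gdelta ![1, 3, 5, 7] ![a, b, c, d] - gdelta ![2, 3, 4, 7] ![a, b, c, d] +
    gdelta ![2, 3, 5, 6] ![a, b, c, d] + gdelta ![4, 5, 6, 7] ![a, b, c, d]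

/-- Components of `I¹ = e¹∧e² − e³∧e⁴`, `I² = e¹∧e³ + e²∧e⁴`,
`I³ = e¹∧e⁴ − e²∧e³` on `ℝ⁴`. -/
noncomputable def Iquat : Fin 3 → Matrix (Fin 4) (Fin 4) ℝ :=
  ![!![0, 1, 0, 0; -1, 0, 0, 0; 0, 0, 0, -1; 0, 0, 1, 0],
    !![0, 0, 1, 0; 0, 0, 0, 1; -1, 0, 0, 0; 0, -1, 0, 0],
    !![0, 0, 0, 1; 0, 0, -1, 0; 0, 1, 0, 0; -1, 0, 0, 0]]

/-- Embed a 4×4 matrix as an 8×8 matrix supported on the first block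
(indices 1–4). -/
noncomputable def pad1 (M : Matrix (Fin 4) (Fin 4) ℝ) : Matrix (Fin 8) (Fin 8) ℝ :=
  fun a b =>
    if h : a.val < 4 ∧ b.val < 4 then M ⟨a.val, h.1⟩ ⟨b.val, h.2⟩ else 0

/-- Embed a 4×4 matrix as an 8×8 matrix supported on the second block
(indices 5–8). -/
noncomputable def pad2 (M : Matrix (Fin 4) (Fin 4) ℝ) : Matrix (Fin 8) (Fin 8) ℝ :=
  fun a b =>
    if h : 4 ≤ a.val ∧ 4 ≤ b.val then
      M ⟨a.val - 4, by omega⟩ ⟨b.val - 4, by omega⟩ else 0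

/-- The anti-self-dual triple `Iᵅ` on the first `ℝ⁴` factor of `ℝ⁸`. -/
noncomputable def I8 (α : Fin 3) : Matrix (Fin 8) (Fin 8) ℝ := pad1 (Iquat α)

/-- The anti-self-dual triple `Îᵅ` on the second `ℝ⁴` factor of `ℝ⁸`. -/
noncomputable def J8 (α : Fin 3) : Matrix (Fin 8) (Fin 8) ℝ := pad2 (Iquat α)

/-- The `SO(3)` matrix `A = ((0,0,1),(0,1,0),(−1,0,0))`. -/
noncomputable def Amat : Matrix (Fin 3) (Fin 3) ℝ := !![0, 0, 1; 0, 1, 0; -1, 0, 0]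


section Aux

lemma fin4_mk3 (h : (3:ℕ) < 4) : (⟨3, h⟩ : Fin 4) = 3 := rfl

open Matrix in
theorem det_fin_four' {R : Type*} [CommRing R] (A : Matrix (Fin 4) (Fin 4) R) :
    det A =
      A 0 0 * (A 1 1 * A 2 2 * A 3 3 - A 1 1 * A 2 3 * A 3 2 - A 1 2 * A 2 1 * A 3 3
        + A 1 2 * A 2 3 * A 3 1 + A 1 3 * A 2 1 * A 3 2 - A 1 3 * A 2 2 * A 3 1)
      - A 0 1 * (A 1 0 * A 2 2 * A 3 3 - A 1 0 * A 2 3 * A 3 2 - A 1 2 * A 2 0 * A 3 3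
        + A 1 2 * A 2 3 * A 3 0 + A 1 3 * A 2 0 * A 3 2 - A 1 3 * A 2 2 * A 3 0)
      + A 0 2 * (A 1 0 * A 2 1 * A 3 3 - A 1 0 * A 2 3 * A 3 1 - A 1 1 * A 2 0 * A 3 3
        + A 1 1 * A 2 3 * A 3 0 + A 1 3 * A 2 0 * A 3 1 - A 1 3 * A 2 1 * A 3 0)
      - A 0 3 * (A 1 0 * A 2 1 * A 3 2 - A 1 0 * A 2 2 * A 3 1 - A 1 1 * A 2 0 * A 3 2
        + A 1 1 * A 2 2 * A 3 0 + A 1 2 * A 2 0 * A 3 1 - A 1 2 * A 2 1 * A 3 0) := by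
  rw [Matrix.det_succ_row_zero, Fin.sum_univ_four]
  simp [Matrix.det_fin_three, Matrix.submatrix_apply, Fin.succAbove, Fin.lt_def, fin4_mk3,
    show Fin.succ 2 = (3:Fin 4) from rfl, show ((3:Fin 4):ℕ) = 3 from rfl,
    show Fin.castSucc (2:Fin 3) = (2:Fin 4) from rfl]
  ring

lemma gdelta_eval (p0 p1 p2 p3 q0 q1 q2 q3 : Fin 8) :
    gdelta ![p0,p1,p2,p3] ![q0,q1,q2,q3] =
      kdelta p0 q0 * (kdelta p1 q1 * kdelta p2 q2 * kdelta p3 q3 - kdelta p1 q1 * kdelta p2 q3 * kdelta p3 q2 - kdelta p1 q2 * kdelta p2 q1 * kdelta p3 q3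
        + kdelta p1 q2 * kdelta p2 q3 * kdelta p3 q1 + kdelta p1 q3 * kdelta p2 q1 * kdelta p3 q2 - kdelta p1 q3 * kdelta p2 q2 * kdelta p3 q1)
      - kdelta p0 q1 * (kdelta p1 q0 * kdelta p2 q2 * kdelta p3 q3 - kdelta p1 q0 * kdelta p2 q3 * kdelta p3 q2 - kdelta p1 q2 * kdelta p2 q0 * kdelta p3 q3
        + kdelta p1 q2 * kdelta p2 q3 * kdelta p3 q0 + kdelta p1 q3 * kdelta p2 q0 * kdelta p3 q2 - kdelta p1 q3 * kdelta p2 q2 * kdelta p3 q0)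
      + kdelta p0 q2 * (kdelta p1 q0 * kdelta p2 q1 * kdelta p3 q3 - kdelta p1 q0 * kdelta p2 q3 * kdelta p3 q1 - kdelta p1 q1 * kdelta p2 q0 * kdelta p3 q3
        + kdelta p1 q1 * kdelta p2 q3 * kdelta p3 q0 + kdelta p1 q3 * kdelta p2 q0 * kdelta p3 q1 - kdelta p1 q3 * kdelta p2 q1 * kdelta p3 q0)
      - kdelta p0 q3 * (kdelta p1 q0 * kdelta p2 q1 * kdelta p3 q2 - kdelta p1 q0 * kdelta p2 q2 * kdelta p3 q1 - kdelta p1 q1 * kdelta p2 q0 * kdelta p3 q2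
        + kdelta p1 q1 * kdelta p2 q2 * kdelta p3 q0 + kdelta p1 q2 * kdelta p2 q0 * kdelta p3 q1 - kdelta p1 q2 * kdelta p2 q1 * kdelta p3 q0) := by
  rw [gdelta]
  refine (det_fin_four' (Matrix.of fun i j => kdelta (![p0,p1,p2,p3] i) (![q0,q1,q2,q3] j))).trans ?_
  rfl

lemma sum_kdelta (p : Fin 8) (X : Fin 8 → ℝ) : ∑ c, kdelta p c * X c = X p := by
  simp [kdelta, ite_mul, Finset.sum_ite_eq]

lemma sum_gdelta (p0 p1 p2 p3 a b : Fin 8) (F : Matrix (Fin 8) (Fin 8) ℝ) :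
    ∑ c, ∑ d, gdelta ![p0,p1,p2,p3] ![a,b,c,d] * F c d =
      (kdelta p0 a * kdelta p1 b - kdelta p1 a * kdelta p0 b) * (F p2 p3 - F p3 p2)
      - (kdelta p0 a * kdelta p2 b - kdelta p2 a * kdelta p0 b) * (F p1 p3 - F p3 p1)
      + (kdelta p0 a * kdelta p3 b - kdelta p3 a * kdelta p0 b) * (F p1 p2 - F p2 p1)
      + (kdelta p1 a * kdelta p2 b - kdelta p2 a * kdelta p1 b) * (F p0 p3 - F p3 p0)
      - (kdelta p1 a * kdelta p3 b - kdelta p3 a * kdelta p1 b) * (F p0 p2 - F p2 p0)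
      + (kdelta p2 a * kdelta p3 b - kdelta p3 a * kdelta p2 b) * (F p0 p1 - F p1 p0) := by
  have h1 : ∀ c d : Fin 8, gdelta ![p0,p1,p2,p3] ![a,b,c,d] * F c d =
      kdelta p0 a * (kdelta p1 b * (kdelta p2 c * (kdelta p3 d * F c d)))
      - kdelta p0 a * (kdelta p1 b * (kdelta p3 c * (kdelta p2 d * F c d)))
      - kdelta p0 a * (kdelta p2 b * (kdelta p1 c * (kdelta p3 d * F c d)))
      + kdelta p0 a * (kdelta p2 b * (kdelta p3 c * (kdelta p1 d * F c d)))
      + kdelta p0 a * (kdelta p3 b * (kdelta p1 c * (kdelta p2 d * F c d)))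
      - kdelta p0 a * (kdelta p3 b * (kdelta p2 c * (kdelta p1 d * F c d)))
      - kdelta p1 a * (kdelta p0 b * (kdelta p2 c * (kdelta p3 d * F c d)))
      + kdelta p1 a * (kdelta p0 b * (kdelta p3 c * (kdelta p2 d * F c d)))
      + kdelta p1 a * (kdelta p2 b * (kdelta p0 c * (kdelta p3 d * F c d)))
      - kdelta p1 a * (kdelta p2 b * (kdelta p3 c * (kdelta p0 d * F c d)))
      - kdelta p1 a * (kdelta p3 b * (kdelta p0 c * (kdelta p2 d * F c d)))
      + kdelta p1 a * (kdelta p3 b * (kdelta p2 c * (kdelta p0 d * F c d)))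
      + kdelta p2 a * (kdelta p0 b * (kdelta p1 c * (kdelta p3 d * F c d)))
      - kdelta p2 a * (kdelta p0 b * (kdelta p3 c * (kdelta p1 d * F c d)))
      - kdelta p2 a * (kdelta p1 b * (kdelta p0 c * (kdelta p3 d * F c d)))
      + kdelta p2 a * (kdelta p1 b * (kdelta p3 c * (kdelta p0 d * F c d)))
      + kdelta p2 a * (kdelta p3 b * (kdelta p0 c * (kdelta p1 d * F c d)))
      - kdelta p2 a * (kdelta p3 b * (kdelta p1 c * (kdelta p0 d * F c d)))
      - kdelta p3 a * (kdelta p0 b * (kdelta p1 c * (kdelta p2 d * F c d)))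
      + kdelta p3 a * (kdelta p0 b * (kdelta p2 c * (kdelta p1 d * F c d)))
      + kdelta p3 a * (kdelta p1 b * (kdelta p0 c * (kdelta p2 d * F c d)))
      - kdelta p3 a * (kdelta p1 b * (kdelta p2 c * (kdelta p0 d * F c d)))
      - kdelta p3 a * (kdelta p2 b * (kdelta p0 c * (kdelta p1 d * F c d)))
      + kdelta p3 a * (kdelta p2 b * (kdelta p1 c * (kdelta p0 d * F c d))) := by
    intro c d
    rw [gdelta_eval]
    ring
  simp only [h1, Finset.sum_add_distrib, Finset.sum_sub_distrib, ← Finset.mul_sum, sum_kdelta]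
  ring

lemma kd00 : kdelta 0 0 = 1 := rfl
lemma kd01 : kdelta 0 1 = 0 := rfl
lemma kd02 : kdelta 0 2 = 0 := rfl
lemma kd03 : kdelta 0 3 = 0 := rfl
lemma kd04 : kdelta 0 4 = 0 := rfl
lemma kd05 : kdelta 0 5 = 0 := rfl
lemma kd06 : kdelta 0 6 = 0 := rfl
lemma kd07 : kdelta 0 7 = 0 := rfl
lemma kd10 : kdelta 1 0 = 0 := rfl
lemma kd11 : kdelta 1 1 = 1 := rfl
lemma kd12 : kdelta 1 2 = 0 := rfl
lemma kd13 : kdelta 1 3 = 0 := rfl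
lemma kd14 : kdelta 1 4 = 0 := rfl
lemma kd15 : kdelta 1 5 = 0 := rfl
lemma kd16 : kdelta 1 6 = 0 := rfl
lemma kd17 : kdelta 1 7 = 0 := rfl
lemma kd20 : kdelta 2 0 = 0 := rfl
lemma kd21 : kdelta 2 1 = 0 := rfl
lemma kd22 : kdelta 2 2 = 1 := rfl
lemma kd23 : kdelta 2 3 = 0 := rfl
lemma kd24 : kdelta 2 4 = 0 := rfl
lemma kd25 : kdelta 2 5 = 0 := rfl
lemma kd26 : kdelta 2 6 = 0 := rfl
lemma kd27 : kdelta 2 7 = 0 := rfl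
lemma kd30 : kdelta 3 0 = 0 := rfl
lemma kd31 : kdelta 3 1 = 0 := rfl
lemma kd32 : kdelta 3 2 = 0 := rfl
lemma kd33 : kdelta 3 3 = 1 := rfl
lemma kd34 : kdelta 3 4 = 0 := rfl
lemma kd35 : kdelta 3 5 = 0 := rfl
lemma kd36 : kdelta 3 6 = 0 := rfl
lemma kd37 : kdelta 3 7 = 0 := rfl
lemma kd40 : kdelta 4 0 = 0 := rfl
lemma kd41 : kdelta 4 1 = 0 := rfl
lemma kd42 : kdelta 4 2 = 0 := rfl
lemma kd43 : kdelta 4 3 = 0 := rfl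
lemma kd44 : kdelta 4 4 = 1 := rfl
lemma kd45 : kdelta 4 5 = 0 := rfl
lemma kd46 : kdelta 4 6 = 0 := rfl
lemma kd47 : kdelta 4 7 = 0 := rfl
lemma kd50 : kdelta 5 0 = 0 := rfl
lemma kd51 : kdelta 5 1 = 0 := rfl
lemma kd52 : kdelta 5 2 = 0 := rfl
lemma kd53 : kdelta 5 3 = 0 := rfl
lemma kd54 : kdelta 5 4 = 0 := rfl
lemma kd55 : kdelta 5 5 = 1 := rfl
lemma kd56 : kdelta 5 6 = 0 := rfl
lemma kd57 : kdelta 5 7 = 0 := rfl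
lemma kd60 : kdelta 6 0 = 0 := rfl
lemma kd61 : kdelta 6 1 = 0 := rfl
lemma kd62 : kdelta 6 2 = 0 := rfl
lemma kd63 : kdelta 6 3 = 0 := rfl
lemma kd64 : kdelta 6 4 = 0 := rfl
lemma kd65 : kdelta 6 5 = 0 := rfl
lemma kd66 : kdelta 6 6 = 1 := rfl
lemma kd67 : kdelta 6 7 = 0 := rfl
lemma kd70 : kdelta 7 0 = 0 := rfl
lemma kd71 : kdelta 7 1 = 0 := rfl
lemma kd72 : kdelta 7 2 = 0 := rfl
lemma kd73 : kdelta 7 3 = 0 := rfl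
lemma kd74 : kdelta 7 4 = 0 := rfl
lemma kd75 : kdelta 7 5 = 0 := rfl
lemma kd76 : kdelta 7 6 = 0 := rfl
lemma kd77 : kdelta 7 7 = 1 := rfl

lemma i8_0_0_0 : I8 0 0 0 = 0 := rfl
lemma j8_0_0_0 : J8 0 0 0 = 0 := rfl
lemma i8_0_0_1 : I8 0 0 1 = 1 := rfl
lemma j8_0_0_1 : J8 0 0 1 = 0 := rfl
lemma i8_0_0_2 : I8 0 0 2 = 0 := rfl
lemma j8_0_0_2 : J8 0 0 2 = 0 := rfl
lemma i8_0_0_3 : I8 0 0 3 = 0 := rfl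
lemma j8_0_0_3 : J8 0 0 3 = 0 := rfl
lemma i8_0_0_4 : I8 0 0 4 = 0 := rfl
lemma j8_0_0_4 : J8 0 0 4 = 0 := rfl
lemma i8_0_0_5 : I8 0 0 5 = 0 := rfl
lemma j8_0_0_5 : J8 0 0 5 = 0 := rfl
lemma i8_0_0_6 : I8 0 0 6 = 0 := rfl
lemma j8_0_0_6 : J8 0 0 6 = 0 := rfl
lemma i8_0_0_7 : I8 0 0 7 = 0 := rfl
lemma j8_0_0_7 : J8 0 0 7 = 0 := rfl
lemma i8_0_1_0 : I8 0 1 0 = -1 := rfl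
lemma j8_0_1_0 : J8 0 1 0 = 0 := rfl
lemma i8_0_1_1 : I8 0 1 1 = 0 := rfl
lemma j8_0_1_1 : J8 0 1 1 = 0 := rfl
lemma i8_0_1_2 : I8 0 1 2 = 0 := rfl
lemma j8_0_1_2 : J8 0 1 2 = 0 := rfl
lemma i8_0_1_3 : I8 0 1 3 = 0 := rfl
lemma j8_0_1_3 : J8 0 1 3 = 0 := rfl
lemma i8_0_1_4 : I8 0 1 4 = 0 := rfl
lemma j8_0_1_4 : J8 0 1 4 = 0 := rfl
lemma i8_0_1_5 : I8 0 1 5 = 0 := rfl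
lemma j8_0_1_5 : J8 0 1 5 = 0 := rfl
lemma i8_0_1_6 : I8 0 1 6 = 0 := rfl
lemma j8_0_1_6 : J8 0 1 6 = 0 := rfl
lemma i8_0_1_7 : I8 0 1 7 = 0 := rfl
lemma j8_0_1_7 : J8 0 1 7 = 0 := rfl
lemma i8_0_2_0 : I8 0 2 0 = 0 := rfl
lemma j8_0_2_0 : J8 0 2 0 = 0 := rfl
lemma i8_0_2_1 : I8 0 2 1 = 0 := rfl
lemma j8_0_2_1 : J8 0 2 1 = 0 := rfl
lemma i8_0_2_2 : I8 0 2 2 = 0 := rfl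
lemma j8_0_2_2 : J8 0 2 2 = 0 := rfl
lemma i8_0_2_3 : I8 0 2 3 = -1 := rfl
lemma j8_0_2_3 : J8 0 2 3 = 0 := rfl
lemma i8_0_2_4 : I8 0 2 4 = 0 := rfl
lemma j8_0_2_4 : J8 0 2 4 = 0 := rfl
lemma i8_0_2_5 : I8 0 2 5 = 0 := rfl
lemma j8_0_2_5 : J8 0 2 5 = 0 := rfl
lemma i8_0_2_6 : I8 0 2 6 = 0 := rfl
lemma j8_0_2_6 : J8 0 2 6 = 0 := rfl
lemma i8_0_2_7 : I8 0 2 7 = 0 := rfl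
lemma j8_0_2_7 : J8 0 2 7 = 0 := rfl
lemma i8_0_3_0 : I8 0 3 0 = 0 := rfl
lemma j8_0_3_0 : J8 0 3 0 = 0 := rfl
lemma i8_0_3_1 : I8 0 3 1 = 0 := rfl
lemma j8_0_3_1 : J8 0 3 1 = 0 := rfl
lemma i8_0_3_2 : I8 0 3 2 = 1 := rfl
lemma j8_0_3_2 : J8 0 3 2 = 0 := rfl
lemma i8_0_3_3 : I8 0 3 3 = 0 := rfl
lemma j8_0_3_3 : J8 0 3 3 = 0 := rfl
lemma i8_0_3_4 : I8 0 3 4 = 0 := rfl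
lemma j8_0_3_4 : J8 0 3 4 = 0 := rfl
lemma i8_0_3_5 : I8 0 3 5 = 0 := rfl
lemma j8_0_3_5 : J8 0 3 5 = 0 := rfl
lemma i8_0_3_6 : I8 0 3 6 = 0 := rfl
lemma j8_0_3_6 : J8 0 3 6 = 0 := rfl
lemma i8_0_3_7 : I8 0 3 7 = 0 := rfl
lemma j8_0_3_7 : J8 0 3 7 = 0 := rfl
lemma i8_0_4_0 : I8 0 4 0 = 0 := rfl
lemma j8_0_4_0 : J8 0 4 0 = 0 := rfl
lemma i8_0_4_1 : I8 0 4 1 = 0 := rfl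
lemma j8_0_4_1 : J8 0 4 1 = 0 := rfl
lemma i8_0_4_2 : I8 0 4 2 = 0 := rfl
lemma j8_0_4_2 : J8 0 4 2 = 0 := rfl
lemma i8_0_4_3 : I8 0 4 3 = 0 := rfl
lemma j8_0_4_3 : J8 0 4 3 = 0 := rfl
lemma i8_0_4_4 : I8 0 4 4 = 0 := rfl
lemma j8_0_4_4 : J8 0 4 4 = 0 := rfl
lemma i8_0_4_5 : I8 0 4 5 = 0 := rfl
lemma j8_0_4_5 : J8 0 4 5 = 1 := rfl
lemma i8_0_4_6 : I8 0 4 6 = 0 := rfl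
lemma j8_0_4_6 : J8 0 4 6 = 0 := rfl
lemma i8_0_4_7 : I8 0 4 7 = 0 := rfl
lemma j8_0_4_7 : J8 0 4 7 = 0 := rfl
lemma i8_0_5_0 : I8 0 5 0 = 0 := rfl
lemma j8_0_5_0 : J8 0 5 0 = 0 := rfl
lemma i8_0_5_1 : I8 0 5 1 = 0 := rfl
lemma j8_0_5_1 : J8 0 5 1 = 0 := rfl
lemma i8_0_5_2 : I8 0 5 2 = 0 := rfl
lemma j8_0_5_2 : J8 0 5 2 = 0 := rfl
lemma i8_0_5_3 : I8 0 5 3 = 0 := rfl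
lemma j8_0_5_3 : J8 0 5 3 = 0 := rfl
lemma i8_0_5_4 : I8 0 5 4 = 0 := rfl
lemma j8_0_5_4 : J8 0 5 4 = -1 := rfl
lemma i8_0_5_5 : I8 0 5 5 = 0 := rfl
lemma j8_0_5_5 : J8 0 5 5 = 0 := rfl
lemma i8_0_5_6 : I8 0 5 6 = 0 := rfl
lemma j8_0_5_6 : J8 0 5 6 = 0 := rfl
lemma i8_0_5_7 : I8 0 5 7 = 0 := rfl
lemma j8_0_5_7 : J8 0 5 7 = 0 := rfl
lemma i8_0_6_0 : I8 0 6 0 = 0 := rfl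
lemma j8_0_6_0 : J8 0 6 0 = 0 := rfl
lemma i8_0_6_1 : I8 0 6 1 = 0 := rfl
lemma j8_0_6_1 : J8 0 6 1 = 0 := rfl
lemma i8_0_6_2 : I8 0 6 2 = 0 := rfl
lemma j8_0_6_2 : J8 0 6 2 = 0 := rfl
lemma i8_0_6_3 : I8 0 6 3 = 0 := rfl
lemma j8_0_6_3 : J8 0 6 3 = 0 := rfl
lemma i8_0_6_4 : I8 0 6 4 = 0 := rfl
lemma j8_0_6_4 : J8 0 6 4 = 0 := rfl
lemma i8_0_6_5 : I8 0 6 5 = 0 := rfl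
lemma j8_0_6_5 : J8 0 6 5 = 0 := rfl
lemma i8_0_6_6 : I8 0 6 6 = 0 := rfl
lemma j8_0_6_6 : J8 0 6 6 = 0 := rfl
lemma i8_0_6_7 : I8 0 6 7 = 0 := rfl
lemma j8_0_6_7 : J8 0 6 7 = -1 := rfl
lemma i8_0_7_0 : I8 0 7 0 = 0 := rfl
lemma j8_0_7_0 : J8 0 7 0 = 0 := rfl
lemma i8_0_7_1 : I8 0 7 1 = 0 := rfl
lemma j8_0_7_1 : J8 0 7 1 = 0 := rfl
lemma i8_0_7_2 : I8 0 7 2 = 0 := rfl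
lemma j8_0_7_2 : J8 0 7 2 = 0 := rfl
lemma i8_0_7_3 : I8 0 7 3 = 0 := rfl
lemma j8_0_7_3 : J8 0 7 3 = 0 := rfl
lemma i8_0_7_4 : I8 0 7 4 = 0 := rfl
lemma j8_0_7_4 : J8 0 7 4 = 0 := rfl
lemma i8_0_7_5 : I8 0 7 5 = 0 := rfl
lemma j8_0_7_5 : J8 0 7 5 = 0 := rfl
lemma i8_0_7_6 : I8 0 7 6 = 0 := rfl
lemma j8_0_7_6 : J8 0 7 6 = 1 := rfl
lemma i8_0_7_7 : I8 0 7 7 = 0 := rfl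
lemma j8_0_7_7 : J8 0 7 7 = 0 := rfl
lemma i8_1_0_0 : I8 1 0 0 = 0 := rfl
lemma j8_1_0_0 : J8 1 0 0 = 0 := rfl
lemma i8_1_0_1 : I8 1 0 1 = 0 := rfl
lemma j8_1_0_1 : J8 1 0 1 = 0 := rfl
lemma i8_1_0_2 : I8 1 0 2 = 1 := rfl
lemma j8_1_0_2 : J8 1 0 2 = 0 := rfl
lemma i8_1_0_3 : I8 1 0 3 = 0 := rfl
lemma j8_1_0_3 : J8 1 0 3 = 0 := rfl
lemma i8_1_0_4 : I8 1 0 4 = 0 := rfl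
lemma j8_1_0_4 : J8 1 0 4 = 0 := rfl
lemma i8_1_0_5 : I8 1 0 5 = 0 := rfl
lemma j8_1_0_5 : J8 1 0 5 = 0 := rfl
lemma i8_1_0_6 : I8 1 0 6 = 0 := rfl
lemma j8_1_0_6 : J8 1 0 6 = 0 := rfl
lemma i8_1_0_7 : I8 1 0 7 = 0 := rfl
lemma j8_1_0_7 : J8 1 0 7 = 0 := rfl
lemma i8_1_1_0 : I8 1 1 0 = 0 := rfl
lemma j8_1_1_0 : J8 1 1 0 = 0 := rfl
lemma i8_1_1_1 : I8 1 1 1 = 0 := rfl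
lemma j8_1_1_1 : J8 1 1 1 = 0 := rfl
lemma i8_1_1_2 : I8 1 1 2 = 0 := rfl
lemma j8_1_1_2 : J8 1 1 2 = 0 := rfl
lemma i8_1_1_3 : I8 1 1 3 = 1 := rfl
lemma j8_1_1_3 : J8 1 1 3 = 0 := rfl
lemma i8_1_1_4 : I8 1 1 4 = 0 := rfl
lemma j8_1_1_4 : J8 1 1 4 = 0 := rfl
lemma i8_1_1_5 : I8 1 1 5 = 0 := rfl
lemma j8_1_1_5 : J8 1 1 5 = 0 := rfl
lemma i8_1_1_6 : I8 1 1 6 = 0 := rfl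
lemma j8_1_1_6 : J8 1 1 6 = 0 := rfl
lemma i8_1_1_7 : I8 1 1 7 = 0 := rfl
lemma j8_1_1_7 : J8 1 1 7 = 0 := rfl
lemma i8_1_2_0 : I8 1 2 0 = -1 := rfl
lemma j8_1_2_0 : J8 1 2 0 = 0 := rfl
lemma i8_1_2_1 : I8 1 2 1 = 0 := rfl
lemma j8_1_2_1 : J8 1 2 1 = 0 := rfl
lemma i8_1_2_2 : I8 1 2 2 = 0 := rfl
lemma j8_1_2_2 : J8 1 2 2 = 0 := rfl
lemma i8_1_2_3 : I8 1 2 3 = 0 := rfl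
lemma j8_1_2_3 : J8 1 2 3 = 0 := rfl
lemma i8_1_2_4 : I8 1 2 4 = 0 := rfl
lemma j8_1_2_4 : J8 1 2 4 = 0 := rfl
lemma i8_1_2_5 : I8 1 2 5 = 0 := rfl
lemma j8_1_2_5 : J8 1 2 5 = 0 := rfl
lemma i8_1_2_6 : I8 1 2 6 = 0 := rfl
lemma j8_1_2_6 : J8 1 2 6 = 0 := rfl
lemma i8_1_2_7 : I8 1 2 7 = 0 := rfl
lemma j8_1_2_7 : J8 1 2 7 = 0 := rfl
lemma i8_1_3_0 : I8 1 3 0 = 0 := rfl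
lemma j8_1_3_0 : J8 1 3 0 = 0 := rfl
lemma i8_1_3_1 : I8 1 3 1 = -1 := rfl
lemma j8_1_3_1 : J8 1 3 1 = 0 := rfl
lemma i8_1_3_2 : I8 1 3 2 = 0 := rfl
lemma j8_1_3_2 : J8 1 3 2 = 0 := rfl
lemma i8_1_3_3 : I8 1 3 3 = 0 := rfl
lemma j8_1_3_3 : J8 1 3 3 = 0 := rfl
lemma i8_1_3_4 : I8 1 3 4 = 0 := rfl
lemma j8_1_3_4 : J8 1 3 4 = 0 := rfl
lemma i8_1_3_5 : I8 1 3 5 = 0 := rfl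
lemma j8_1_3_5 : J8 1 3 5 = 0 := rfl
lemma i8_1_3_6 : I8 1 3 6 = 0 := rfl
lemma j8_1_3_6 : J8 1 3 6 = 0 := rfl
lemma i8_1_3_7 : I8 1 3 7 = 0 := rfl
lemma j8_1_3_7 : J8 1 3 7 = 0 := rfl
lemma i8_1_4_0 : I8 1 4 0 = 0 := rfl
lemma j8_1_4_0 : J8 1 4 0 = 0 := rfl
lemma i8_1_4_1 : I8 1 4 1 = 0 := rfl
lemma j8_1_4_1 : J8 1 4 1 = 0 := rfl
lemma i8_1_4_2 : I8 1 4 2 = 0 := rfl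
lemma j8_1_4_2 : J8 1 4 2 = 0 := rfl
lemma i8_1_4_3 : I8 1 4 3 = 0 := rfl
lemma j8_1_4_3 : J8 1 4 3 = 0 := rfl
lemma i8_1_4_4 : I8 1 4 4 = 0 := rfl
lemma j8_1_4_4 : J8 1 4 4 = 0 := rfl
lemma i8_1_4_5 : I8 1 4 5 = 0 := rfl
lemma j8_1_4_5 : J8 1 4 5 = 0 := rfl
lemma i8_1_4_6 : I8 1 4 6 = 0 := rfl
lemma j8_1_4_6 : J8 1 4 6 = 1 := rfl
lemma i8_1_4_7 : I8 1 4 7 = 0 := rfl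
lemma j8_1_4_7 : J8 1 4 7 = 0 := rfl
lemma i8_1_5_0 : I8 1 5 0 = 0 := rfl
lemma j8_1_5_0 : J8 1 5 0 = 0 := rfl
lemma i8_1_5_1 : I8 1 5 1 = 0 := rfl
lemma j8_1_5_1 : J8 1 5 1 = 0 := rfl
lemma i8_1_5_2 : I8 1 5 2 = 0 := rfl
lemma j8_1_5_2 : J8 1 5 2 = 0 := rfl
lemma i8_1_5_3 : I8 1 5 3 = 0 := rfl
lemma j8_1_5_3 : J8 1 5 3 = 0 := rfl
lemma i8_1_5_4 : I8 1 5 4 = 0 := rfl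
lemma j8_1_5_4 : J8 1 5 4 = 0 := rfl
lemma i8_1_5_5 : I8 1 5 5 = 0 := rfl
lemma j8_1_5_5 : J8 1 5 5 = 0 := rfl
lemma i8_1_5_6 : I8 1 5 6 = 0 := rfl
lemma j8_1_5_6 : J8 1 5 6 = 0 := rfl
lemma i8_1_5_7 : I8 1 5 7 = 0 := rfl
lemma j8_1_5_7 : J8 1 5 7 = 1 := rfl
lemma i8_1_6_0 : I8 1 6 0 = 0 := rfl
lemma j8_1_6_0 : J8 1 6 0 = 0 := rfl
lemma i8_1_6_1 : I8 1 6 1 = 0 := rfl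
lemma j8_1_6_1 : J8 1 6 1 = 0 := rfl
lemma i8_1_6_2 : I8 1 6 2 = 0 := rfl
lemma j8_1_6_2 : J8 1 6 2 = 0 := rfl
lemma i8_1_6_3 : I8 1 6 3 = 0 := rfl
lemma j8_1_6_3 : J8 1 6 3 = 0 := rfl
lemma i8_1_6_4 : I8 1 6 4 = 0 := rfl
lemma j8_1_6_4 : J8 1 6 4 = -1 := rfl
lemma i8_1_6_5 : I8 1 6 5 = 0 := rfl
lemma j8_1_6_5 : J8 1 6 5 = 0 := rfl
lemma i8_1_6_6 : I8 1 6 6 = 0 := rfl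
lemma j8_1_6_6 : J8 1 6 6 = 0 := rfl
lemma i8_1_6_7 : I8 1 6 7 = 0 := rfl
lemma j8_1_6_7 : J8 1 6 7 = 0 := rfl
lemma i8_1_7_0 : I8 1 7 0 = 0 := rfl
lemma j8_1_7_0 : J8 1 7 0 = 0 := rfl
lemma i8_1_7_1 : I8 1 7 1 = 0 := rfl
lemma j8_1_7_1 : J8 1 7 1 = 0 := rfl
lemma i8_1_7_2 : I8 1 7 2 = 0 := rfl
lemma j8_1_7_2 : J8 1 7 2 = 0 := rfl
lemma i8_1_7_3 : I8 1 7 3 = 0 := rfl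
lemma j8_1_7_3 : J8 1 7 3 = 0 := rfl
lemma i8_1_7_4 : I8 1 7 4 = 0 := rfl
lemma j8_1_7_4 : J8 1 7 4 = 0 := rfl
lemma i8_1_7_5 : I8 1 7 5 = 0 := rfl
lemma j8_1_7_5 : J8 1 7 5 = -1 := rfl
lemma i8_1_7_6 : I8 1 7 6 = 0 := rfl
lemma j8_1_7_6 : J8 1 7 6 = 0 := rfl
lemma i8_1_7_7 : I8 1 7 7 = 0 := rfl
lemma j8_1_7_7 : J8 1 7 7 = 0 := rfl
lemma i8_2_0_0 : I8 2 0 0 = 0 := rfl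
lemma j8_2_0_0 : J8 2 0 0 = 0 := rfl
lemma i8_2_0_1 : I8 2 0 1 = 0 := rfl
lemma j8_2_0_1 : J8 2 0 1 = 0 := rfl
lemma i8_2_0_2 : I8 2 0 2 = 0 := rfl
lemma j8_2_0_2 : J8 2 0 2 = 0 := rfl
lemma i8_2_0_3 : I8 2 0 3 = 1 := rfl
lemma j8_2_0_3 : J8 2 0 3 = 0 := rfl
lemma i8_2_0_4 : I8 2 0 4 = 0 := rfl
lemma j8_2_0_4 : J8 2 0 4 = 0 := rfl
lemma i8_2_0_5 : I8 2 0 5 = 0 := rfl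
lemma j8_2_0_5 : J8 2 0 5 = 0 := rfl
lemma i8_2_0_6 : I8 2 0 6 = 0 := rfl
lemma j8_2_0_6 : J8 2 0 6 = 0 := rfl
lemma i8_2_0_7 : I8 2 0 7 = 0 := rfl
lemma j8_2_0_7 : J8 2 0 7 = 0 := rfl
lemma i8_2_1_0 : I8 2 1 0 = 0 := rfl
lemma j8_2_1_0 : J8 2 1 0 = 0 := rfl
lemma i8_2_1_1 : I8 2 1 1 = 0 := rfl
lemma j8_2_1_1 : J8 2 1 1 = 0 := rfl
lemma i8_2_1_2 : I8 2 1 2 = -1 := rfl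
lemma j8_2_1_2 : J8 2 1 2 = 0 := rfl
lemma i8_2_1_3 : I8 2 1 3 = 0 := rfl
lemma j8_2_1_3 : J8 2 1 3 = 0 := rfl
lemma i8_2_1_4 : I8 2 1 4 = 0 := rfl
lemma j8_2_1_4 : J8 2 1 4 = 0 := rfl
lemma i8_2_1_5 : I8 2 1 5 = 0 := rfl
lemma j8_2_1_5 : J8 2 1 5 = 0 := rfl
lemma i8_2_1_6 : I8 2 1 6 = 0 := rfl
lemma j8_2_1_6 : J8 2 1 6 = 0 := rfl
lemma i8_2_1_7 : I8 2 1 7 = 0 := rfl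
lemma j8_2_1_7 : J8 2 1 7 = 0 := rfl
lemma i8_2_2_0 : I8 2 2 0 = 0 := rfl
lemma j8_2_2_0 : J8 2 2 0 = 0 := rfl
lemma i8_2_2_1 : I8 2 2 1 = 1 := rfl
lemma j8_2_2_1 : J8 2 2 1 = 0 := rfl
lemma i8_2_2_2 : I8 2 2 2 = 0 := rfl
lemma j8_2_2_2 : J8 2 2 2 = 0 := rfl
lemma i8_2_2_3 : I8 2 2 3 = 0 := rfl
lemma j8_2_2_3 : J8 2 2 3 = 0 := rfl
lemma i8_2_2_4 : I8 2 2 4 = 0 := rfl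
lemma j8_2_2_4 : J8 2 2 4 = 0 := rfl
lemma i8_2_2_5 : I8 2 2 5 = 0 := rfl
lemma j8_2_2_5 : J8 2 2 5 = 0 := rfl
lemma i8_2_2_6 : I8 2 2 6 = 0 := rfl
lemma j8_2_2_6 : J8 2 2 6 = 0 := rfl
lemma i8_2_2_7 : I8 2 2 7 = 0 := rfl
lemma j8_2_2_7 : J8 2 2 7 = 0 := rfl
lemma i8_2_3_0 : I8 2 3 0 = -1 := rfl
lemma j8_2_3_0 : J8 2 3 0 = 0 := rfl
lemma i8_2_3_1 : I8 2 3 1 = 0 := rfl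
lemma j8_2_3_1 : J8 2 3 1 = 0 := rfl
lemma i8_2_3_2 : I8 2 3 2 = 0 := rfl
lemma j8_2_3_2 : J8 2 3 2 = 0 := rfl
lemma i8_2_3_3 : I8 2 3 3 = 0 := rfl
lemma j8_2_3_3 : J8 2 3 3 = 0 := rfl
lemma i8_2_3_4 : I8 2 3 4 = 0 := rfl
lemma j8_2_3_4 : J8 2 3 4 = 0 := rfl
lemma i8_2_3_5 : I8 2 3 5 = 0 := rfl
lemma j8_2_3_5 : J8 2 3 5 = 0 := rfl
lemma i8_2_3_6 : I8 2 3 6 = 0 := rfl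
lemma j8_2_3_6 : J8 2 3 6 = 0 := rfl
lemma i8_2_3_7 : I8 2 3 7 = 0 := rfl
lemma j8_2_3_7 : J8 2 3 7 = 0 := rfl
lemma i8_2_4_0 : I8 2 4 0 = 0 := rfl
lemma j8_2_4_0 : J8 2 4 0 = 0 := rfl
lemma i8_2_4_1 : I8 2 4 1 = 0 := rfl
lemma j8_2_4_1 : J8 2 4 1 = 0 := rfl
lemma i8_2_4_2 : I8 2 4 2 = 0 := rfl
lemma j8_2_4_2 : J8 2 4 2 = 0 := rfl
lemma i8_2_4_3 : I8 2 4 3 = 0 := rfl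
lemma j8_2_4_3 : J8 2 4 3 = 0 := rfl
lemma i8_2_4_4 : I8 2 4 4 = 0 := rfl
lemma j8_2_4_4 : J8 2 4 4 = 0 := rfl
lemma i8_2_4_5 : I8 2 4 5 = 0 := rfl
lemma j8_2_4_5 : J8 2 4 5 = 0 := rfl
lemma i8_2_4_6 : I8 2 4 6 = 0 := rfl
lemma j8_2_4_6 : J8 2 4 6 = 0 := rfl
lemma i8_2_4_7 : I8 2 4 7 = 0 := rfl
lemma j8_2_4_7 : J8 2 4 7 = 1 := rfl
lemma i8_2_5_0 : I8 2 5 0 = 0 := rfl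
lemma j8_2_5_0 : J8 2 5 0 = 0 := rfl
lemma i8_2_5_1 : I8 2 5 1 = 0 := rfl
lemma j8_2_5_1 : J8 2 5 1 = 0 := rfl
lemma i8_2_5_2 : I8 2 5 2 = 0 := rfl
lemma j8_2_5_2 : J8 2 5 2 = 0 := rfl
lemma i8_2_5_3 : I8 2 5 3 = 0 := rfl
lemma j8_2_5_3 : J8 2 5 3 = 0 := rfl
lemma i8_2_5_4 : I8 2 5 4 = 0 := rfl
lemma j8_2_5_4 : J8 2 5 4 = 0 := rfl
lemma i8_2_5_5 : I8 2 5 5 = 0 := rfl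
lemma j8_2_5_5 : J8 2 5 5 = 0 := rfl
lemma i8_2_5_6 : I8 2 5 6 = 0 := rfl
lemma j8_2_5_6 : J8 2 5 6 = -1 := rfl
lemma i8_2_5_7 : I8 2 5 7 = 0 := rfl
lemma j8_2_5_7 : J8 2 5 7 = 0 := rfl
lemma i8_2_6_0 : I8 2 6 0 = 0 := rfl
lemma j8_2_6_0 : J8 2 6 0 = 0 := rfl
lemma i8_2_6_1 : I8 2 6 1 = 0 := rfl
lemma j8_2_6_1 : J8 2 6 1 = 0 := rfl
lemma i8_2_6_2 : I8 2 6 2 = 0 := rfl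
lemma j8_2_6_2 : J8 2 6 2 = 0 := rfl
lemma i8_2_6_3 : I8 2 6 3 = 0 := rfl
lemma j8_2_6_3 : J8 2 6 3 = 0 := rfl
lemma i8_2_6_4 : I8 2 6 4 = 0 := rfl
lemma j8_2_6_4 : J8 2 6 4 = 0 := rfl
lemma i8_2_6_5 : I8 2 6 5 = 0 := rfl
lemma j8_2_6_5 : J8 2 6 5 = 1 := rfl
lemma i8_2_6_6 : I8 2 6 6 = 0 := rfl
lemma j8_2_6_6 : J8 2 6 6 = 0 := rfl
lemma i8_2_6_7 : I8 2 6 7 = 0 := rfl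
lemma j8_2_6_7 : J8 2 6 7 = 0 := rfl
lemma i8_2_7_0 : I8 2 7 0 = 0 := rfl
lemma j8_2_7_0 : J8 2 7 0 = 0 := rfl
lemma i8_2_7_1 : I8 2 7 1 = 0 := rfl
lemma j8_2_7_1 : J8 2 7 1 = 0 := rfl
lemma i8_2_7_2 : I8 2 7 2 = 0 := rfl
lemma j8_2_7_2 : J8 2 7 2 = 0 := rfl
lemma i8_2_7_3 : I8 2 7 3 = 0 := rfl
lemma j8_2_7_3 : J8 2 7 3 = 0 := rfl
lemma i8_2_7_4 : I8 2 7 4 = 0 := rfl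
lemma j8_2_7_4 : J8 2 7 4 = -1 := rfl
lemma i8_2_7_5 : I8 2 7 5 = 0 := rfl
lemma j8_2_7_5 : J8 2 7 5 = 0 := rfl
lemma i8_2_7_6 : I8 2 7 6 = 0 := rfl
lemma j8_2_7_6 : J8 2 7 6 = 0 := rfl
lemma i8_2_7_7 : I8 2 7 7 = 0 := rfl
lemma j8_2_7_7 : J8 2 7 7 = 0 := rfl

lemma am00 : Amat 0 0 = 0 := rfl
lemma am01 : Amat 0 1 = 0 := rfl
lemma am02 : Amat 0 2 = 1 := rfl
lemma am10 : Amat 1 0 = 0 := rfl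
lemma am11 : Amat 1 1 = 1 := rfl
lemma am12 : Amat 1 2 = 0 := rfl
lemma am20 : Amat 2 0 = -1 := rfl
lemma am21 : Amat 2 1 = 0 := rfl
lemma am22 : Amat 2 2 = 0 := rfl

lemma fin3mk0 (h : (0:ℕ) < 3) : (⟨0, h⟩ : Fin 3) = 0 := rfl
lemma fin3mk1 (h : (1:ℕ) < 3) : (⟨1, h⟩ : Fin 3) = 1 := rfl
lemma fin3mk2 (h : (2:ℕ) < 3) : (⟨2, h⟩ : Fin 3) = 2 := rfl

end Aux

set_option maxHeartbeats 2000000 in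
/-- A skew `F` satisfying the octonionic instanton equation
`F_{ab} = ½ Ω_{abcd} F_{cd}` satisfies `Iᵅ · F = ∑_β A_{αβ} (Îᵝ · F)`. -/
theorem stmt13 (F : Matrix (Fin 8) (Fin 8) ℝ) (hskew : Fᵀ = -F)
    (hinst : ∀ a b, F a b = (1 / 2) * ∑ c, ∑ d, Omega4 a b c d * F c d) :
    ∀ α, ∑ i, ∑ j, I8 α i j * F i j =
      ∑ β, Amat α β * ∑ m, ∑ n, J8 β m n * F m n := by
  have hsk : ∀ a b : Fin 8, F b a = - F a b := by
    intro a b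
    have := congrFun (congrFun hskew a) b
    simpa [Matrix.transpose_apply, Matrix.neg_apply] using this
  have e01 := hinst 0 1
  simp only [Omega4, add_mul, sub_mul, Finset.sum_add_distrib, Finset.sum_sub_distrib,
    sum_gdelta, kd00, kd01, kd02, kd03, kd04, kd05, kd06, kd07, kd10, kd11, kd12, kd13, kd14, kd15, kd16, kd17, kd20, kd21, kd22, kd23, kd24, kd25, kd26, kd27, kd30, kd31, kd32, kd33, kd34, kd35, kd36, kd37, kd40, kd41, kd42, kd43, kd44, kd45, kd46, kd47, kd50, kd51, kd52, kd53, kd54, kd55, kd56, kd57, kd60, kd61, kd62, kd63, kd64, kd65, kd66, kd67, kd70, kd71, kd72, kd73, kd74, kd75, kd76, kd77] at e01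
  norm_num at e01
  have e23 := hinst 2 3
  simp only [Omega4, add_mul, sub_mul, Finset.sum_add_distrib, Finset.sum_sub_distrib,
    sum_gdelta, kd00, kd01, kd02, kd03, kd04, kd05, kd06, kd07, kd10, kd11, kd12, kd13, kd14, kd15, kd16, kd17, kd20, kd21, kd22, kd23, kd24, kd25, kd26, kd27, kd30, kd31, kd32, kd33, kd34, kd35, kd36, kd37, kd40, kd41, kd42, kd43, kd44, kd45, kd46, kd47, kd50, kd51, kd52, kd53, kd54, kd55, kd56, kd57, kd60, kd61, kd62, kd63, kd64, kd65, kd66, kd67, kd70, kd71, kd72, kd73, kd74, kd75, kd76, kd77] at e23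
  norm_num at e23
  have e02 := hinst 0 2
  simp only [Omega4, add_mul, sub_mul, Finset.sum_add_distrib, Finset.sum_sub_distrib,
    sum_gdelta, kd00, kd01, kd02, kd03, kd04, kd05, kd06, kd07, kd10, kd11, kd12, kd13, kd14, kd15, kd16, kd17, kd20, kd21, kd22, kd23, kd24, kd25, kd26, kd27, kd30, kd31, kd32, kd33, kd34, kd35, kd36, kd37, kd40, kd41, kd42, kd43, kd44, kd45, kd46, kd47, kd50, kd51, kd52, kd53, kd54, kd55, kd56, kd57, kd60, kd61, kd62, kd63, kd64, kd65, kd66, kd67, kd70, kd71, kd72, kd73, kd74, kd75, kd76, kd77] at e02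
  norm_num at e02
  have e13 := hinst 1 3
  simp only [Omega4, add_mul, sub_mul, Finset.sum_add_distrib, Finset.sum_sub_distrib,
    sum_gdelta, kd00, kd01, kd02, kd03, kd04, kd05, kd06, kd07, kd10, kd11, kd12, kd13, kd14, kd15, kd16, kd17, kd20, kd21, kd22, kd23, kd24, kd25, kd26, kd27, kd30, kd31, kd32, kd33, kd34, kd35, kd36, kd37, kd40, kd41, kd42, kd43, kd44, kd45, kd46, kd47, kd50, kd51, kd52, kd53, kd54, kd55, kd56, kd57, kd60, kd61, kd62, kd63, kd64, kd65, kd66, kd67, kd70, kd71, kd72, kd73, kd74, kd75, kd76, kd77] at e13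
  norm_num at e13
  have e03 := hinst 0 3
  simp only [Omega4, add_mul, sub_mul, Finset.sum_add_distrib, Finset.sum_sub_distrib,
    sum_gdelta, kd00, kd01, kd02, kd03, kd04, kd05, kd06, kd07, kd10, kd11, kd12, kd13, kd14, kd15, kd16, kd17, kd20, kd21, kd22, kd23, kd24, kd25, kd26, kd27, kd30, kd31, kd32, kd33, kd34, kd35, kd36, kd37, kd40, kd41, kd42, kd43, kd44, kd45, kd46, kd47, kd50, kd51, kd52, kd53, kd54, kd55, kd56, kd57, kd60, kd61, kd62, kd63, kd64, kd65, kd66, kd67, kd70, kd71, kd72, kd73, kd74, kd75, kd76, kd77] at e03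
  norm_num at e03
  have e12 := hinst 1 2
  simp only [Omega4, add_mul, sub_mul, Finset.sum_add_distrib, Finset.sum_sub_distrib,
    sum_gdelta, kd00, kd01, kd02, kd03, kd04, kd05, kd06, kd07, kd10, kd11, kd12, kd13, kd14, kd15, kd16, kd17, kd20, kd21, kd22, kd23, kd24, kd25, kd26, kd27, kd30, kd31, kd32, kd33, kd34, kd35, kd36, kd37, kd40, kd41, kd42, kd43, kd44, kd45, kd46, kd47, kd50, kd51, kd52, kd53, kd54, kd55, kd56, kd57, kd60, kd61, kd62, kd63, kd64, kd65, kd66, kd67, kd70, kd71, kd72, kd73, kd74, kd75, kd76, kd77] at e12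
  norm_num at e12
  intro α
  fin_cases α <;>
  · simp only [fin3mk0, fin3mk1, fin3mk2, Fin.sum_univ_eight, Fin.sum_univ_three, i8_0_0_0, i8_0_0_1, i8_0_0_2, i8_0_0_3, i8_0_0_4, i8_0_0_5, i8_0_0_6, i8_0_0_7, i8_0_1_0, i8_0_1_1, i8_0_1_2, i8_0_1_3, i8_0_1_4, i8_0_1_5, i8_0_1_6, i8_0_1_7, i8_0_2_0, i8_0_2_1, i8_0_2_2, i8_0_2_3, i8_0_2_4, i8_0_2_5, i8_0_2_6, i8_0_2_7, i8_0_3_0, i8_0_3_1, i8_0_3_2, i8_0_3_3, i8_0_3_4, i8_0_3_5, i8_0_3_6, i8_0_3_7, i8_0_4_0, i8_0_4_1, i8_0_4_2, i8_0_4_3, i8_0_4_4, i8_0_4_5, i8_0_4_6, i8_0_4_7, i8_0_5_0, i8_0_5_1, i8_0_5_2, i8_0_5_3, i8_0_5_4, i8_0_5_5, i8_0_5_6, i8_0_5_7, i8_0_6_0, i8_0_6_1, i8_0_6_2, i8_0_6_3, i8_0_6_4, i8_0_6_5, i8_0_6_6, i8_0_6_7, i8_0_7_0, i8_0_7_1,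 i8_0_7_2, i8_0_7_3, i8_0_7_4, i8_0_7_5, i8_0_7_6, i8_0_7_7, i8_1_0_0, i8_1_0_1, i8_1_0_2, i8_1_0_3, i8_1_0_4, i8_1_0_5, i8_1_0_6, i8_1_0_7, i8_1_1_0, i8_1_1_1, i8_1_1_2, i8_1_1_3, i8_1_1_4, i8_1_1_5, i8_1_1_6, i8_1_1_7, i8_1_2_0, i8_1_2_1, i8_1_2_2, i8_1_2_3, i8_1_2_4, i8_1_2_5, i8_1_2_6, i8_1_2_7, i8_1_3_0, i8_1_3_1, i8_1_3_2, i8_1_3_3, i8_1_3_4, i8_1_3_5, i8_1_3_6, i8_1_3_7, i8_1_4_0, i8_1_4_1, i8_1_4_2, i8_1_4_3, i8_1_4_4, i8_1_4_5, i8_1_4_6, i8_1_4_7, i8_1_5_0, i8_1_5_1, i8_1_5_2, i8_1_5_3, i8_1_5_4, i8_1_5_5, i8_1_5_6, i8_1_5_7, i8_1_6_0, i8_1_6_1, i8_1_6_2, i8_1_6_3, i8_1_6_4, i8_1_6_5, i8_1_6_6, i8_1_6_7, i8_1_7_0, i8_1_7_1, i8_1_7_2, i8_1_7_3, i8_1_7_4,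 i8_1_7_5, i8_1_7_6, i8_1_7_7, i8_2_0_0, i8_2_0_1, i8_2_0_2, i8_2_0_3, i8_2_0_4, i8_2_0_5, i8_2_0_6, i8_2_0_7, i8_2_1_0, i8_2_1_1, i8_2_1_2, i8_2_1_3, i8_2_1_4, i8_2_1_5, i8_2_1_6, i8_2_1_7, i8_2_2_0, i8_2_2_1, i8_2_2_2, i8_2_2_3, i8_2_2_4, i8_2_2_5, i8_2_2_6, i8_2_2_7, i8_2_3_0, i8_2_3_1, i8_2_3_2, i8_2_3_3, i8_2_3_4, i8_2_3_5, i8_2_3_6, i8_2_3_7, i8_2_4_0, i8_2_4_1, i8_2_4_2, i8_2_4_3, i8_2_4_4, i8_2_4_5, i8_2_4_6, i8_2_4_7, i8_2_5_0, i8_2_5_1, i8_2_5_2, i8_2_5_3, i8_2_5_4, i8_2_5_5, i8_2_5_6, i8_2_5_7, i8_2_6_0, i8_2_6_1, i8_2_6_2, i8_2_6_3, i8_2_6_4, i8_2_6_5, i8_2_6_6, i8_2_6_7, i8_2_7_0, i8_2_7_1, i8_2_7_2, i8_2_7_3, i8_2_7_4, i8_2_7_5, i8_2_7_6, i8_2_7_7,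 j8_0_0_0, j8_0_0_1, j8_0_0_2, j8_0_0_3, j8_0_0_4, j8_0_0_5, j8_0_0_6, j8_0_0_7, j8_0_1_0, j8_0_1_1, j8_0_1_2, j8_0_1_3, j8_0_1_4, j8_0_1_5, j8_0_1_6, j8_0_1_7, j8_0_2_0, j8_0_2_1, j8_0_2_2, j8_0_2_3, j8_0_2_4, j8_0_2_5, j8_0_2_6, j8_0_2_7, j8_0_3_0, j8_0_3_1, j8_0_3_2, j8_0_3_3, j8_0_3_4, j8_0_3_5, j8_0_3_6, j8_0_3_7, j8_0_4_0, j8_0_4_1, j8_0_4_2, j8_0_4_3, j8_0_4_4, j8_0_4_5, j8_0_4_6, j8_0_4_7, j8_0_5_0, j8_0_5_1, j8_0_5_2, j8_0_5_3, j8_0_5_4, j8_0_5_5, j8_0_5_6, j8_0_5_7, j8_0_6_0, j8_0_6_1, j8_0_6_2, j8_0_6_3, j8_0_6_4, j8_0_6_5, j8_0_6_6, j8_0_6_7, j8_0_7_0, j8_0_7_1, j8_0_7_2, j8_0_7_3, j8_0_7_4, j8_0_7_5, j8_0_7_6, j8_0_7_7, j8_1_0_0, j8_1_0_1, j8_1_0_2,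 j8_1_0_3, j8_1_0_4, j8_1_0_5, j8_1_0_6, j8_1_0_7, j8_1_1_0, j8_1_1_1, j8_1_1_2, j8_1_1_3, j8_1_1_4, j8_1_1_5, j8_1_1_6, j8_1_1_7, j8_1_2_0, j8_1_2_1, j8_1_2_2, j8_1_2_3, j8_1_2_4, j8_1_2_5, j8_1_2_6, j8_1_2_7, j8_1_3_0, j8_1_3_1, j8_1_3_2, j8_1_3_3, j8_1_3_4, j8_1_3_5, j8_1_3_6, j8_1_3_7, j8_1_4_0, j8_1_4_1, j8_1_4_2, j8_1_4_3, j8_1_4_4, j8_1_4_5, j8_1_4_6, j8_1_4_7, j8_1_5_0, j8_1_5_1, j8_1_5_2, j8_1_5_3, j8_1_5_4, j8_1_5_5, j8_1_5_6, j8_1_5_7, j8_1_6_0, j8_1_6_1, j8_1_6_2, j8_1_6_3, j8_1_6_4, j8_1_6_5, j8_1_6_6, j8_1_6_7, j8_1_7_0, j8_1_7_1, j8_1_7_2, j8_1_7_3, j8_1_7_4, j8_1_7_5, j8_1_7_6, j8_1_7_7, j8_2_0_0, j8_2_0_1, j8_2_0_2, j8_2_0_3, j8_2_0_4, j8_2_0_5,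 j8_2_0_6, j8_2_0_7, j8_2_1_0, j8_2_1_1, j8_2_1_2, j8_2_1_3, j8_2_1_4, j8_2_1_5, j8_2_1_6, j8_2_1_7, j8_2_2_0, j8_2_2_1, j8_2_2_2, j8_2_2_3, j8_2_2_4, j8_2_2_5, j8_2_2_6, j8_2_2_7, j8_2_3_0, j8_2_3_1, j8_2_3_2, j8_2_3_3, j8_2_3_4, j8_2_3_5, j8_2_3_6, j8_2_3_7, j8_2_4_0, j8_2_4_1, j8_2_4_2, j8_2_4_3, j8_2_4_4, j8_2_4_5, j8_2_4_6, j8_2_4_7, j8_2_5_0, j8_2_5_1, j8_2_5_2, j8_2_5_3, j8_2_5_4, j8_2_5_5, j8_2_5_6, j8_2_5_7, j8_2_6_0, j8_2_6_1, j8_2_6_2, j8_2_6_3, j8_2_6_4, j8_2_6_5, j8_2_6_6, j8_2_6_7, j8_2_7_0, j8_2_7_1, j8_2_7_2, j8_2_7_3, j8_2_7_4, j8_2_7_5, j8_2_7_6, j8_2_7_7, am00, am01, am02, am10, am11, am12, am20, am21, am22]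
    norm_num
    linarith [e01, e23, e02, e13, e03, e12, hsk 0 1, hsk 0 2, hsk 0 3, hsk 0 4, hsk 0 5, hsk 0 6, hsk 0 7, hsk 1 2, hsk 1 3, hsk 1 4, hsk 1 5, hsk 1 6, hsk 1 7, hsk 2 3, hsk 2 4, hsk 2 5, hsk 2 6, hsk 2 7, hsk 3 4, hsk 3 5, hsk 3 6, hsk 3 7, hsk 4 5, hsk 4 6, hsk 4 7, hsk 5 6, hsk 5 7, hsk 6 7]
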